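/- arXiv:1804.01529 — 9 statements merged into one kernel-verified Lean document; each statement's English description precedes it below -/
import Mathlib

section
/- Let X be a real-valued random variable with E[X] = 0, E[X^2] = σ², E[X^3] ≥ relevant 0, and E[X^4] ≤ c·σ⁴ for some c > 0. Then Pr[X ≥ 0] ≤ 1 - 1/(2c). -/
open MeasureTheory

private lemma quartic_key (y : ℝ) :
    -(3/4)*y + y^2 + (1/4)*y^3 - (1/2)*y^4 ≤ if y < 0 then (1:ℝ) else 0 := by
  split_ifs with h
  · nlinarith [mul_nonneg (sq_nonneg (y+1))
      (show (0:ℝ) ≤ 2*y^2 - 5*y + 4 by nlinarith [sq_nonneg (2*y - 5/2)])]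
  · push_neg at h
    nlinarith [mul_nonneg (mul_nonneg h (sq_nonneg (y-1))) (show (0:ℝ) ≤ 2*y + 3 by linarith)]

theorem small_dev_fourth_moment
    {Ω : Type*} [MeasurableSpace Ω] (μ : Measure Ω) [IsProbabilityMeasure μ]
    (X : Ω → ℝ) (hX : Measurable X) (σ c : ℝ) (hσ : 0 < σ) (hc : 0 < c)
    (hint : ∀ k : ℕ, k ≤ 4 → Integrable (fun ω => (X ω) ^ k) μ)
    (h1 : ∫ ω, X ω ∂μ = 0)
    (h2 : ∫ ω, (X ω) ^ 2 ∂μ = σ ^ 2)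
    (h3 : 0 ≤ ∫ ω, (X ω) ^ 3 ∂μ)
    (h4 : ∫ ω, (X ω) ^ 4 ∂μ ≤ c * σ ^ 4) :
    (μ {ω | 0 ≤ X ω}).toReal ≤ 1 - 1 / (2 * c) := by
  have hs : (0:ℝ) < Real.sqrt c := Real.sqrt_pos.mpr hc
  set t : ℝ := σ * Real.sqrt c with htdef
  have ht : 0 < t := mul_pos hσ hs
  have ht2 : t^2 = c * σ^2 := by
    rw [htdef, mul_pow, Real.sq_sqrt hc.le]; ring
  have ht4 : t^4 = c^2 * σ^4 := by
    have : t^4 = (t^2)^2 := by ring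
    rw [this, ht2]; ring
  have I1 : Integrable (fun ω => X ω) μ := by simpa using hint 1 (by norm_num)
  have I2 := hint 2 (by norm_num)
  have I3 := hint 3 (by norm_num)
  have I4 := hint 4 (by norm_num)
  set a : ℝ := -(3/4)/t with hadef
  set b : ℝ := 1/t^2 with hbdef
  set d : ℝ := (1/4)/t^3 with hddef
  set e : ℝ := -(1/2)/t^4 with hedef
  have hg : Integrable (fun ω => a * X ω + b * (X ω)^2 + d * (X ω)^3 + e * (X ω)^4) μ :=
    (((I1.const_mul a).add (I2.const_mul b)).add (I3.const_mul d)).add (I4.const_mul e)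
  have hmeas : MeasurableSet {ω | X ω < 0} := measurableSet_lt hX measurable_const
  have hind : Integrable ((({ω | X ω < 0}) : Set Ω).indicator (fun _ => (1:ℝ))) μ :=
    (integrable_const (1:ℝ)).indicator hmeas
  have hpt : ∀ ω, a * X ω + b * (X ω)^2 + d * (X ω)^3 + e * (X ω)^4 ≤
      (({ω | X ω < 0}) : Set Ω).indicator (fun _ => (1:ℝ)) ω := by
    intro ω
    have hkey := quartic_key (X ω / t)
    have heq : a * X ω + b * (X ω)^2 + d * (X ω)^3 + e * (X ω)^4 =
        -(3/4)*(X ω / t) + (X ω / t)^2 + (1/4)*(X ω / t)^3 - (1/2)*(X ω / t)^4 := by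
      rw [hadef, hbdef, hddef, hedef]; field_simp; ring
    have hiff : (X ω / t < 0) ↔ (X ω < 0) := by
      constructor
      · intro h; by_contra hn; push_neg at hn
        exact absurd (div_nonneg hn ht.le) (not_le.mpr h)
      · intro h; exact div_neg_of_neg_of_pos h ht
    rw [heq, Set.indicator_apply]
    simp only [Set.mem_setOf_eq]
    split_ifs with h
    · calc _ ≤ (if X ω / t < 0 then (1:ℝ) else 0) := hkey
        _ ≤ 1 := by split_ifs <;> norm_num
    · have : ¬ (X ω / t < 0) := fun hh => h (hiff.mp hh)
      rw [if_neg this] at hkey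
      exact hkey
  have hmono : ∫ ω, (a * X ω + b * (X ω)^2 + d * (X ω)^3 + e * (X ω)^4) ∂μ ≤
      ∫ ω, (({ω | X ω < 0}) : Set Ω).indicator (fun _ => (1:ℝ)) ω ∂μ :=
    integral_mono hg hind hpt
  have hind_int : ∫ ω, (({ω | X ω < 0}) : Set Ω).indicator (fun _ => (1:ℝ)) ω ∂μ =
      (μ {ω | X ω < 0}).toReal := by
    rw [integral_indicator_const (1:ℝ) hmeas]; simp; rfl
  have hsplit : ∫ ω, (a * X ω + b * (X ω)^2 + d * (X ω)^3 + e * (X ω)^4) ∂μ =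
      a * (∫ ω, X ω ∂μ) + b * (∫ ω, (X ω)^2 ∂μ) + d * (∫ ω, (X ω)^3 ∂μ)
        + e * (∫ ω, (X ω)^4 ∂μ) := by
    have J12 : Integrable (fun ω => a * X ω + b * (X ω)^2) μ :=
      (I1.const_mul a).add (I2.const_mul b)
    have J123 : Integrable (fun ω => a * X ω + b * (X ω)^2 + d * (X ω)^3) μ :=
      J12.add (I3.const_mul d)
    have s1 : ∫ ω, (a * X ω + b * (X ω)^2 + d * (X ω)^3 + e * (X ω)^4) ∂μ =
        (∫ ω, (a * X ω + b * (X ω)^2 + d * (X ω)^3) ∂μ) + ∫ ω, e * (X ω)^4 ∂μ :=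
      integral_add J123 (I4.const_mul e)
    have s2 : ∫ ω, (a * X ω + b * (X ω)^2 + d * (X ω)^3) ∂μ =
        (∫ ω, (a * X ω + b * (X ω)^2) ∂μ) + ∫ ω, d * (X ω)^3 ∂μ :=
      integral_add J12 (I3.const_mul d)
    have s3 : ∫ ω, (a * X ω + b * (X ω)^2) ∂μ =
        (∫ ω, a * X ω ∂μ) + ∫ ω, b * (X ω)^2 ∂μ :=
      integral_add (I1.const_mul a) (I2.const_mul b)
    rw [s1, s2, s3, integral_const_mul, integral_const_mul, integral_const_mul,
      integral_const_mul]
  set M3 := ∫ ω, (X ω)^3 ∂μ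
  set M4 := ∫ ω, (X ω)^4 ∂μ
  have hlow : 1 / (2*c) ≤ (μ {ω | X ω < 0}).toReal := by
    rw [← hind_int]
    refine le_trans ?_ hmono
    rw [hsplit, h1, h2]
    have hbσ : b * σ^2 = 1/c := by
      rw [hbdef, ht2]
      field_simp
    have hd0 : 0 ≤ d * M3 := mul_nonneg (by positivity) h3
    have he4 : -(1/(2*c)) ≤ e * M4 := by
      have he_neg : e ≤ 0 := by
        rw [hedef]
        apply div_nonpos_of_nonpos_of_nonneg
        · norm_num
        · positivity
      have : e * (c * σ^4) ≤ e * M4 := by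
        rcases lt_or_eq_of_le he_neg with h' | h'
        · exact (mul_le_mul_left_of_neg h').mpr h4
        · simp [h']
      refine le_trans (le_of_eq ?_) this
      rw [hedef, ht4]
      field_simp
    rw [mul_zero, zero_add]
    have : 1/(2*c) = 1/c + (-(1/(2*c))) := by field_simp; ring
    rw [this, ← hbσ]
    linarith
  have hcompl : ({ω | 0 ≤ X ω} : Set Ω) = ({ω | X ω < 0} : Set Ω)ᶜ := by
    ext ω; simp [not_lt]
  rw [hcompl, measure_compl hmeas (measure_ne_top μ _), measure_univ,
    ENNReal.toReal_sub_of_le prob_le_one ENNReal.one_ne_top]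
  norm_num
  have hl2 : c⁻¹ * (1/2) = 1/(2*c) := by ring
  linarith
end

section
/- For any ℓ, r > 0, the quartic polynomial Q_{ℓ,r}(x) = (1/(ℓ²(ℓ+r)³))·(ℓ+x)²·((ℓ+r)³ - 2(ℓ²+3ℓr+r²)x + (3ℓ+r)x²) satisfies Q_{ℓ,r}(x) ≥ 0 for all real x. -/
theorem Qlr_nonneg (l r : ℝ) (hl : 0 < l) (hr : 0 < r) (x : ℝ) :
    0 ≤ (1 / (l ^ 2 * (l + r) ^ 3)) * (l + x) ^ 2 *
      ((l + r) ^ 3 - 2 * (l ^ 2 + 3 * l * r + r ^ 2) * x + (3 * l + r) * x ^ 2) := by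
  have h1 : 0 < l ^ 2 * (l + r) ^ 3 := by positivity
  have h2 : 0 ≤ (l + r) ^ 3 - 2 * (l ^ 2 + 3 * l * r + r ^ 2) * x + (3 * l + r) * x ^ 2 := by
    have h3 : 0 < 3 * l + r := by linarith
    nlinarith [sq_nonneg ((3 * l + r) * x - (l ^ 2 + 3 * l * r + r ^ 2)), sq_nonneg l,
      sq_nonneg (l * r), mul_pos hl hr, mul_pos (mul_pos hl hl) (mul_pos hl hl),
      mul_pos (mul_pos hl hl) (mul_pos hl hr)]
  positivity
end

section
/- For any ℓ, r > 0, the polynomial Q_{ℓ,r}(x) = (1/(ℓ²(ℓ+r)³))·(ℓ+x)²·((ℓ+r)³ - 2(ℓ²+3ℓr+r²)x + (3ℓ+r)x²) satisfies Q_{ℓ,r}(x) ≥ 1 for all x ≥ 0. -/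
theorem Qlr_ge_one (l r : ℝ) (hl : 0 < l) (hr : 0 < r) (x : ℝ) (hx : 0 ≤ x) :
    1 ≤ (1 / (l ^ 2 * (l + r) ^ 3)) * (l + x) ^ 2 *
      ((l + r) ^ 3 - 2 * (l ^ 2 + 3 * l * r + r ^ 2) * x + (3 * l + r) * x ^ 2) := by
  have hd : 0 < l ^ 2 * (l + r) ^ 3 := by positivity
  have key : (1 / (l ^ 2 * (l + r) ^ 3)) * (l + x) ^ 2 *
      ((l + r) ^ 3 - 2 * (l ^ 2 + 3 * l * r + r ^ 2) * x + (3 * l + r) * x ^ 2) - 1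
      = x * (4 * l ^ 2 + 2 * l * r + (3 * l + r) * x) * (x - r) ^ 2
        / (l ^ 2 * (l + r) ^ 3) := by
    field_simp
    ring
  have hnum : 0 ≤ x * (4 * l ^ 2 + 2 * l * r + (3 * l + r) * x) * (x - r) ^ 2 := by
    have : (0:ℝ) ≤ 4 * l ^ 2 + 2 * l * r + (3 * l + r) * x := by positivity
    positivity
  have := div_nonneg hnum hd.le
  linarith [key ▸ this]
end

section
/- For any ℓ, r > 0, the polynomial Q_{ℓ,r}(x) = (1/(ℓ²(ℓ+r)³))·(ℓ+x)²·((ℓ+r)³ - 2(ℓ²+3ℓr+r²)x + (3ℓ+r)x²) dominates the indicator of the nonnegative half-line: Q_{ℓ,r}(x) ≥ 1 for x ≥ 0 and Q_{ℓ,r}(x) ≥ 0 for all x. -/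
theorem Qlr_dominates_indicator (l r : ℝ) (hl : 0 < l) (hr : 0 < r) :
    (∀ x : ℝ, 0 ≤ x →
      1 ≤ (1 / (l ^ 2 * (l + r) ^ 3)) * (l + x) ^ 2 *
        ((l + r) ^ 3 - 2 * (l ^ 2 + 3 * l * r + r ^ 2) * x + (3 * l + r) * x ^ 2)) ∧
    (∀ x : ℝ,
      0 ≤ (1 / (l ^ 2 * (l + r) ^ 3)) * (l + x) ^ 2 *
        ((l + r) ^ 3 - 2 * (l ^ 2 + 3 * l * r + r ^ 2) * x + (3 * l + r) * x ^ 2)) := by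
  have hD : 0 < l ^ 2 * (l + r) ^ 3 := by positivity
  constructor
  · intro x hx
    have h2 : 0 ≤ x * (x - r) ^ 2 * ((3 * l + r) * x + 2 * l * (2 * l + r)) := by
      apply mul_nonneg (mul_nonneg hx (sq_nonneg _))
      nlinarith [mul_nonneg hx hl.le, mul_nonneg hx hr.le]
    have heq : (1 / (l ^ 2 * (l + r) ^ 3)) * (l + x) ^ 2 *
        ((l + r) ^ 3 - 2 * (l ^ 2 + 3 * l * r + r ^ 2) * x + (3 * l + r) * x ^ 2)
        = ((l + x) ^ 2 *
        ((l + r) ^ 3 - 2 * (l ^ 2 + 3 * l * r + r ^ 2) * x + (3 * l + r) * x ^ 2)) /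
        (l ^ 2 * (l + r) ^ 3) := by ring
    rw [heq, le_div_iff₀ hD]
    nlinarith [h2]
  · intro x
    have hp : 0 ≤ (l + r) ^ 3 - 2 * (l ^ 2 + 3 * l * r + r ^ 2) * x + (3 * l + r) * x ^ 2 := by
      nlinarith [sq_nonneg ((3 * l + r) * x - (l ^ 2 + 3 * l * r + r ^ 2)), sq_nonneg (l * r),
        sq_nonneg (l ^ 2), mul_pos hl hr, mul_pos (mul_pos hl hl) (mul_pos hl hr)]
    have h1 : (0:ℝ) ≤ 1 / (l ^ 2 * (l + r) ^ 3) := by positivity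
    exact mul_nonneg (mul_nonneg h1 (sq_nonneg _)) hp
end

section
/- Let X₁, ..., Xₙ be independent random variables with E[Xᵢ] = 0 and |Xᵢ| ≤ 1 for each i, and let X = ∑ᵢ Xᵢ. Then E[X⁴] ≤ 3·(E[X²])² + E[X²]. -/
open MeasureTheory ProbabilityTheory Finset

private lemma fmb_integrable {Ω : Type*} [MeasurableSpace Ω] {μ : Measure Ω}
    [IsProbabilityMeasure μ] {f : Ω → ℝ} (hf : Measurable f) {C : ℝ}
    (h : ∀ ω, |f ω| ≤ C) : Integrable f μ :=
  ⟨hf.aestronglyMeasurable,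
    HasFiniteIntegral.of_bounded (ae_of_all μ (fun ω => by simpa [Real.norm_eq_abs] using h ω))⟩

private lemma fmb_aux {Ω : Type*} [MeasurableSpace Ω] {μ : Measure Ω} [IsProbabilityMeasure μ]
    {n : ℕ} {X : Fin n → Ω → ℝ} (hmeas : ∀ i, Measurable (X i))
    (hindep : iIndepFun X μ)
    (hmean : ∀ i, ∫ ω, X i ω ∂μ = 0)
    (hbound : ∀ i ω, |X i ω| ≤ 1) (s : Finset (Fin n)) :
    (∫ ω, (∑ i ∈ s, X i ω) ∂μ = 0) ∧
    ∫ ω, (∑ i ∈ s, X i ω) ^ 4 ∂μ ≤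
      3 * (∫ ω, (∑ i ∈ s, X i ω) ^ 2 ∂μ) ^ 2 + ∫ ω, (∑ i ∈ s, X i ω) ^ 2 ∂μ := by
  classical
  induction s using Finset.cons_induction with
  | empty => simp
  | cons a s ha ih =>
    set S : Ω → ℝ := fun ω => ∑ i ∈ s, X i ω with hSdef
    set Y : Ω → ℝ := fun ω => X a ω with hYdef
    have hSmeas : Measurable S := Finset.measurable_sum s (fun i _ => hmeas i)
    have hYmeas : Measurable Y := hmeas a
    have hSbd : ∀ ω, |S ω| ≤ (s.card : ℝ) := by
      intro ω
      calc |S ω| ≤ ∑ i ∈ s, |X i ω| := Finset.abs_sum_le_sum_abs _ _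
        _ ≤ ∑ _i ∈ s, (1 : ℝ) := Finset.sum_le_sum fun i _ => hbound i ω
        _ = (s.card : ℝ) := by simp
    have hYbd : ∀ ω, |Y ω| ≤ 1 := hbound a
    -- integrability of S^p * Y^q
    have hint : ∀ p q : ℕ, Integrable (fun ω => S ω ^ p * Y ω ^ q) μ := by
      intro p q
      refine fmb_integrable (by fun_prop) (C := (s.card : ℝ) ^ p) (fun ω => ?_)
      rw [abs_mul, abs_pow, abs_pow]
      calc |S ω| ^ p * |Y ω| ^ q ≤ (s.card : ℝ) ^ p * 1 ^ q := by
            exact mul_le_mul (pow_le_pow_left₀ (abs_nonneg _) (hSbd ω) p)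
              (pow_le_pow_left₀ (abs_nonneg _) (hYbd ω) q) (by positivity) (by positivity)
        _ = (s.card : ℝ) ^ p := by simp
    have hintS : ∀ p : ℕ, Integrable (fun ω => S ω ^ p) μ := by
      intro p; simpa using hint p 0
    have hintY : ∀ q : ℕ, Integrable (fun ω => Y ω ^ q) μ := by
      intro q; simpa using hint 0 q
    -- independence
    have hI : IndepFun S Y μ := by
      have h := (hindep.indepFun_finsetSum_of_notMem hmeas ha).symm
      have hfun : (∑ i ∈ s, X i) = S := by funext ω; simp [hSdef]
      rw [hfun] at h
      exact h.symm
    have hmix : ∀ p q : ℕ,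
        ∫ ω, S ω ^ p * Y ω ^ q ∂μ = (∫ ω, S ω ^ p ∂μ) * ∫ ω, Y ω ^ q ∂μ := by
      intro p q
      have hI2 : IndepFun (fun ω => S ω ^ p) (fun ω => Y ω ^ q) μ :=
        hI.comp (measurable_id.pow_const p) (measurable_id.pow_const q)
      exact hI2.integral_mul_eq_mul_integral (hintS p).aestronglyMeasurable (hintY q).aestronglyMeasurable
    have hES : ∫ ω, S ω ∂μ = 0 := ih.1
    have hEY : ∫ ω, Y ω ∂μ = 0 := hmean a
    have hES1 : ∫ ω, S ω ^ 1 ∂μ = 0 := by simpa using hES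
    have hEY1 : ∫ ω, Y ω ^ 1 ∂μ = 0 := by simpa using hEY
    -- rewrite the cons sums
    have hsum : ∀ ω, (∑ i ∈ Finset.cons a s ha, X i ω) = S ω + Y ω := by
      intro ω; rw [Finset.sum_cons]; ring
    -- second moment
    have hE2 : ∫ ω, (∑ i ∈ Finset.cons a s ha, X i ω) ^ 2 ∂μ
        = (∫ ω, S ω ^ 2 ∂μ) + ∫ ω, Y ω ^ 2 ∂μ := by
      have hexp : ∀ ω, (∑ i ∈ Finset.cons a s ha, X i ω) ^ 2
          = S ω ^ 2 + 2 * (S ω ^ 1 * Y ω ^ 1) + Y ω ^ 2 := by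
        intro ω; rw [hsum ω]; ring
      have i1 : Integrable (fun ω => S ω ^ 2 + 2 * (S ω ^ 1 * Y ω ^ 1)) μ :=
        (hintS 2).add ((hint 1 1).const_mul 2)
      simp_rw [hexp]
      rw [integral_add i1 (hintY 2),
        integral_add (hintS 2) ((hint 1 1).const_mul 2), integral_const_mul, hmix, hES1]
      ring
    -- first moment
    have hE1 : ∫ ω, (∑ i ∈ Finset.cons a s ha, X i ω) ∂μ = 0 := by
      simp_rw [hsum]
      rw [integral_add (by simpa using hintS 1) (by simpa using hintY 1), hES, hEY]
      ring
    -- fourth moment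
    have hE4 : ∫ ω, (∑ i ∈ Finset.cons a s ha, X i ω) ^ 4 ∂μ
        = (∫ ω, S ω ^ 4 ∂μ) + 6 * ((∫ ω, S ω ^ 2 ∂μ) * ∫ ω, Y ω ^ 2 ∂μ)
          + ∫ ω, Y ω ^ 4 ∂μ := by
      have hexp : ∀ ω, (∑ i ∈ Finset.cons a s ha, X i ω) ^ 4
          = S ω ^ 4 + 4 * (S ω ^ 3 * Y ω ^ 1) + 6 * (S ω ^ 2 * Y ω ^ 2)
            + 4 * (S ω ^ 1 * Y ω ^ 3) + Y ω ^ 4 := by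
        intro ω; rw [hsum ω]; ring
      have i2 : Integrable (fun ω => S ω ^ 4 + 4 * (S ω ^ 3 * Y ω ^ 1)) μ :=
        (hintS 4).add ((hint 3 1).const_mul 4)
      have i3 : Integrable
          (fun ω => S ω ^ 4 + 4 * (S ω ^ 3 * Y ω ^ 1) + 6 * (S ω ^ 2 * Y ω ^ 2)) μ :=
        i2.add ((hint 2 2).const_mul 6)
      have i4 : Integrable (fun ω => S ω ^ 4 + 4 * (S ω ^ 3 * Y ω ^ 1)
          + 6 * (S ω ^ 2 * Y ω ^ 2) + 4 * (S ω ^ 1 * Y ω ^ 3)) μ :=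
        i3.add ((hint 1 3).const_mul 4)
      simp_rw [hexp]
      rw [integral_add i4 (hintY 4),
        integral_add i3 ((hint 1 3).const_mul 4),
        integral_add i2 ((hint 2 2).const_mul 6),
        integral_add (hintS 4) ((hint 3 1).const_mul 4),
        integral_const_mul, integral_const_mul, integral_const_mul,
        hmix 3 1, hmix 2 2, hmix 1 3, hEY1, hES1]
      ring
    -- Y^4 ≤ Y^2
    have hY42 : ∫ ω, Y ω ^ 4 ∂μ ≤ ∫ ω, Y ω ^ 2 ∂μ := by
      refine integral_mono (hintY 4) (hintY 2) (fun ω => ?_)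
      have h := abs_le.mp (hYbd ω)
      have h2 : Y ω ^ 2 ≤ 1 := by nlinarith [h.1, h.2]
      calc Y ω ^ 4 = Y ω ^ 2 * Y ω ^ 2 := by ring
        _ ≤ Y ω ^ 2 * 1 := mul_le_mul_of_nonneg_left h2 (sq_nonneg _)
        _ = Y ω ^ 2 := mul_one _
    have hA : (0 : ℝ) ≤ ∫ ω, S ω ^ 2 ∂μ := integral_nonneg fun ω => by positivity
    have hB : (0 : ℝ) ≤ ∫ ω, Y ω ^ 2 ∂μ := integral_nonneg fun ω => by positivity
    refine ⟨hE1, ?_⟩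
    rw [hE2, hE4]
    nlinarith [ih.2, hY42, hA, hB]

theorem fourth_moment_bound
    {Ω : Type*} [MeasurableSpace Ω] (μ : Measure Ω) [IsProbabilityMeasure μ]
    (n : ℕ) (X : Fin n → Ω → ℝ) (hmeas : ∀ i, Measurable (X i))
    (hindep : iIndepFun X μ)
    (hmean : ∀ i, ∫ ω, X i ω ∂μ = 0)
    (hbound : ∀ i ω, |X i ω| ≤ 1) :
    ∫ ω, (∑ i, X i ω) ^ 4 ∂μ ≤
      3 * (∫ ω, (∑ i, X i ω) ^ 2 ∂μ) ^ 2 + ∫ ω, (∑ i, X i ω) ^ 2 ∂μ := by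
  exact (fmb_aux hmeas hindep hmean hbound Finset.univ).2
end

section
/- Fix a > 0 and 0 < p < 1/2, and let X be the random variable taking value -a with probability p, value 0 with probability 1-2p, and value a with probability p. Then E[X]=0, E[X³]=0, E[X⁴] = c·(E[X²])² with c = 1/(2p), and Pr[X ≥ 0] = 1 - p = 1 - 1/(2c), so the bound Pr[X ≥ 0] ≤ 1 - 1/(2c) is tight. -/
open MeasureTheory

theorem three_point_tight
    {Ω : Type*} [MeasurableSpace Ω] (μ : Measure Ω) [IsProbabilityMeasure μ]
    (X : Ω → ℝ) (hX : Measurable X) (a p : ℝ) (ha : 0 < a) (hp0 : 0 < p) (hp : p < 1/2)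
    (hsupp : ∀ ω, X ω = -a ∨ X ω = 0 ∨ X ω = a)
    (hpa : μ {ω | X ω = -a} = ENNReal.ofReal p)
    (hpb : μ {ω | X ω = a} = ENNReal.ofReal p) :
    (∫ ω, X ω ∂μ = 0) ∧
    (∫ ω, (X ω) ^ 3 ∂μ = 0) ∧
    (∫ ω, (X ω) ^ 4 ∂μ = (1 / (2 * p)) * (∫ ω, (X ω) ^ 2 ∂μ) ^ 2) ∧
    ((μ {ω | 0 ≤ X ω}).toReal = 1 - p) ∧
    (1 - p = 1 - 1 / (2 * (1 / (2 * p)))) := by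
  have hA : MeasurableSet {ω | X ω = -a} := hX (measurableSet_singleton (-a))
  have hC : MeasurableSet {ω | X ω = a} := hX (measurableSet_singleton a)
  have hane : (-a : ℝ) ≠ a := by linarith
  have h0a : (0 : ℝ) ≠ -a := by linarith
  have h0b : (0 : ℝ) ≠ a := ha.ne
  have key : ∀ n : ℕ, 1 ≤ n → ∫ ω, (X ω) ^ n ∂μ = ((-a) ^ n + a ^ n) * p := by
    intro n hn
    have hfun : (fun ω => (X ω) ^ n)
        = fun ω => Set.indicator {ω | X ω = -a} (fun _ => (-a) ^ n) ω
            + Set.indicator {ω | X ω = a} (fun _ => a ^ n) ω := by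
      funext ω
      rcases hsupp ω with h | h | h <;>
        simp [Set.indicator_apply, Set.mem_setOf_eq, h, hane, hane.symm, h0a, h0b,
          zero_pow (by omega : n ≠ 0)]
    rw [hfun, integral_add ((integrable_const _).indicator hA)
      ((integrable_const _).indicator hC),
      integral_indicator_const _ hA, integral_indicator_const _ hC,
      measureReal_def, measureReal_def, hpa, hpb, ENNReal.toReal_ofReal hp0.le]
    simp [smul_eq_mul]; ring
  have hp1 : ENNReal.ofReal p ≤ 1 :=
    ENNReal.ofReal_le_one.mpr (by linarith)
  refine ⟨?_, ?_, ?_, ?_, ?_⟩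
  · have := key 1 le_rfl
    simp only [pow_one] at this
    rw [this]; ring
  · rw [key 3 (by norm_num)]; ring
  · rw [key 4 (by norm_num), key 2 (by norm_num)]
    field_simp
    ring
  · have hset : {ω | 0 ≤ X ω} = {ω | X ω = -a}ᶜ := by
      ext ω
      simp only [Set.mem_setOf_eq, Set.mem_compl_iff]
      constructor
      · intro h he; rw [he] at h; linarith
      · intro h; rcases hsupp ω with h' | h' | h' <;> [exact absurd h' h; linarith; linarith]
    rw [hset, prob_compl_eq_one_sub hA, hpa,
      ENNReal.toReal_sub_of_le hp1 ENNReal.one_ne_top,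
      ENNReal.toReal_one, ENNReal.toReal_ofReal hp0.le]
  · field_simp
end

section
/- Let X be a random variable with E[X] = 0 and E[X²] = σ² > 0, and let δ > 0. For the polynomial Q_r(x) = 1 + (3/(4r))x - (1/r²)x² - (1/(4r³))x³ + (1/(2r⁴))x⁴ with r = √3·σ, if E[X³] ≥ -σ² and E[X⁴] ≤ 3σ⁴ + σ², then E[Q_r(X - δ)] ≤ 5/6 + (2δ⁴ + √3·δ³σ + (2+8δ)σ² + (√3 - 6√3·δ)σ³)/(36σ⁴). -/
open MeasureTheory

set_option maxHeartbeats 800000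

theorem Q_sqrt3sigma_bound
    {Ω : Type*} [MeasurableSpace Ω] (μ : Measure Ω) [IsProbabilityMeasure μ]
    (X : Ω → ℝ) (hX : Measurable X) (σ δ : ℝ) (hσ : 0 < σ) (hδ : 0 < δ)
    (hint : ∀ k : ℕ, k ≤ 4 → Integrable (fun ω => (X ω) ^ k) μ)
    (h1 : ∫ ω, X ω ∂μ = 0)
    (h2 : ∫ ω, (X ω) ^ 2 ∂μ = σ ^ 2)
    (h3 : -σ ^ 2 ≤ ∫ ω, (X ω) ^ 3 ∂μ)
    (h4 : ∫ ω, (X ω) ^ 4 ∂μ ≤ 3 * σ ^ 4 + σ ^ 2) :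
    ∫ ω, (1 + (3 / (4 * (Real.sqrt 3 * σ))) * (X ω - δ)
        - (1 / (Real.sqrt 3 * σ) ^ 2) * (X ω - δ) ^ 2
        - (1 / (4 * (Real.sqrt 3 * σ) ^ 3)) * (X ω - δ) ^ 3
        + (1 / (2 * (Real.sqrt 3 * σ) ^ 4)) * (X ω - δ) ^ 4) ∂μ ≤
      5/6 + (2 * δ ^ 4 + Real.sqrt 3 * δ ^ 3 * σ + (2 + 8 * δ) * σ ^ 2
        + (Real.sqrt 3 - 6 * Real.sqrt 3 * δ) * σ ^ 3) / (36 * σ ^ 4) := by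
  have hs2 : (Real.sqrt 3) ^ 2 = 3 := Real.sq_sqrt (by norm_num)
  have hspos : (0:ℝ) < Real.sqrt 3 := Real.sqrt_pos.mpr (by norm_num)
  set s := Real.sqrt 3 with hs
  set r := s * σ with hr
  have hrpos : 0 < r := mul_pos hspos hσ
  have hrne : r ≠ 0 := ne_of_gt hrpos
  set c0 : ℝ := 1 - (3/(4*r))*δ - (1/r^2)*δ^2 + (1/(4*r^3))*δ^3 + (1/(2*r^4))*δ^4 with hc0
  set c1 : ℝ := 3/(4*r) + 2*(1/r^2)*δ - 3*(1/(4*r^3))*δ^2 - 4*(1/(2*r^4))*δ^3 with hc1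
  set c2 : ℝ := -(1/r^2) + 3*(1/(4*r^3))*δ + 6*(1/(2*r^4))*δ^2 with hc2
  set c3 : ℝ := -(1/(4*r^3)) - 4*(1/(2*r^4))*δ with hc3
  set c4 : ℝ := 1/(2*r^4) with hc4
  have hi1 := hint 1 (by norm_num)
  have hi2 := hint 2 (by norm_num)
  have hi3 := hint 3 (by norm_num)
  have hi4 := hint 4 (by norm_num)
  simp only [pow_one] at hi1
  have heq : ∫ ω, (1 + (3 / (4 * r)) * (X ω - δ)
        - (1 / r ^ 2) * (X ω - δ) ^ 2
        - (1 / (4 * r ^ 3)) * (X ω - δ) ^ 3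
        + (1 / (2 * r ^ 4)) * (X ω - δ) ^ 4) ∂μ
      = c0 + c1 * (∫ ω, X ω ∂μ) + c2 * (∫ ω, (X ω)^2 ∂μ)
        + c3 * (∫ ω, (X ω)^3 ∂μ) + c4 * (∫ ω, (X ω)^4 ∂μ) := by
    have hfun : (fun ω => 1 + (3 / (4 * r)) * (X ω - δ)
        - (1 / r ^ 2) * (X ω - δ) ^ 2
        - (1 / (4 * r ^ 3)) * (X ω - δ) ^ 3
        + (1 / (2 * r ^ 4)) * (X ω - δ) ^ 4)
        = fun ω => c0 + c1 * X ω + c2 * (X ω)^2 + c3 * (X ω)^3 + c4 * (X ω)^4 := by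
      funext ω
      simp only [hc0, hc1, hc2, hc3, hc4]
      field_simp
      ring
    rw [hfun]
    have I1 := hi1.const_mul c1
    have I2 := hi2.const_mul c2
    have I3 := hi3.const_mul c3
    have I4 := hi4.const_mul c4
    have e4' : ∫ ω, ((c0 + c1 * X ω + c2 * X ω ^ 2 + c3 * X ω ^ 3) + c4 * X ω ^ 4) ∂μ
        = ∫ ω, (c0 + c1 * X ω + c2 * X ω ^ 2 + c3 * X ω ^ 3) ∂μ + ∫ ω, c4 * X ω ^ 4 ∂μ :=
      integral_add ((((integrable_const c0).add I1).add I2).add I3) I4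
    have e3' : ∫ ω, ((c0 + c1 * X ω + c2 * X ω ^ 2) + c3 * X ω ^ 3) ∂μ
        = ∫ ω, (c0 + c1 * X ω + c2 * X ω ^ 2) ∂μ + ∫ ω, c3 * X ω ^ 3 ∂μ :=
      integral_add (((integrable_const c0).add I1).add I2) I3
    have e2' : ∫ ω, ((c0 + c1 * X ω) + c2 * X ω ^ 2) ∂μ
        = ∫ ω, (c0 + c1 * X ω) ∂μ + ∫ ω, c2 * X ω ^ 2 ∂μ :=
      integral_add ((integrable_const c0).add I1) I2
    have e1' : ∫ ω, (c0 + c1 * X ω) ∂μ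
        = ∫ ω, (c0 : ℝ) ∂μ + ∫ ω, c1 * X ω ∂μ :=
      integral_add (integrable_const c0) I1
    rw [e4', e3', e2', e1']
    simp [integral_const_mul]
  rw [heq, h1, h2]
  have hc3neg : c3 ≤ 0 := by
    rw [hc3]
    have h1' : 0 < 1/(4*r^3) := by positivity
    have h2' : 0 < 4*(1/(2*r^4))*δ := by positivity
    linarith
  have hc4pos : 0 ≤ c4 := by rw [hc4]; positivity
  have hm3 : c3 * (∫ ω, (X ω)^3 ∂μ) ≤ c3 * (-σ^2) :=
    mul_le_mul_of_nonpos_left h3 hc3neg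
  have hm4 : c4 * (∫ ω, (X ω)^4 ∂μ) ≤ c4 * (3*σ^4 + σ^2) :=
    mul_le_mul_of_nonneg_left h4 hc4pos
  have hfin : c0 + c1 * 0 + c2 * σ^2 + c3 * (-σ^2) + c4 * (3*σ^4 + σ^2)
      = 5/6 + (2 * δ ^ 4 + s * δ ^ 3 * σ + (2 + 8 * δ) * σ ^ 2
        + (s - 6 * s * δ) * σ ^ 3) / (36 * σ ^ 4) := by
    have hσne : σ ≠ 0 := ne_of_gt hσ
    have hsne : s ≠ 0 := ne_of_gt hspos
    have e3 : s ^ 3 = 3 * s := by linear_combination s * hs2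
    have e4 : s ^ 4 = 9 := by linear_combination (s ^ 2 + 3) * hs2
    have er2 : r ^ 2 = 3 * σ ^ 2 := by rw [hr]; linear_combination σ ^ 2 * hs2
    have er3 : r ^ 3 = 3 * s * σ ^ 3 := by rw [hr]; linear_combination σ ^ 3 * s * hs2
    have er4 : r ^ 4 = 9 * σ ^ 4 := by rw [hr]; linear_combination σ ^ 4 * (s ^ 2 + 3) * hs2
    simp only [hc0, hc1, hc2, hc3, hc4, er2, er3, er4, hr]
    field_simp
    have e5 : s ^ 5 = 9 * s := by linear_combination (s ^ 3 + 3 * s) * hs2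
    ring_nf
    simp only [e5, e4, e3, hs2]
    ring
  clear_value c0 c1 c2 c3 c4
  linarith [hm3, hm4, hfin]
end

section
/- Let δ > 0 and n be such that m := (n+δ)/(δ+1) is a positive integer with m ≤ n. Then there exists a collection of nonnegative pairwise independent random variables X₁, ..., Xₙ, each with mean 1, such that Pr[X₁ + ... + Xₙ < n + δ] = δ/(n+δ). -/
open MeasureTheory ProbabilityTheory

lemma PIC_count_subsets {α : Type*} [DecidableEq α] (u t : Finset α) (k : ℕ)
    (htu : t ⊆ u) (htk : t.card ≤ k) :
    ((Finset.powersetCard k u).filter (fun s => t ⊆ s)).card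
      = (u.card - t.card).choose (k - t.card) := by
  have h1 : ((u \ t).card) = u.card - t.card := Finset.card_sdiff_of_subset htu
  rw [← h1, ← Finset.card_powersetCard (k - t.card) (u \ t)]
  refine Finset.card_bij' (fun s _ => s \ t) (fun v _ => v ∪ t) ?_ ?_ ?_ ?_
  · intro s hs
    simp only [Finset.mem_filter, Finset.mem_powersetCard] at hs ⊢
    exact ⟨Finset.sdiff_subset_sdiff hs.1.1 le_rfl,
      by rw [Finset.card_sdiff_of_subset hs.2, hs.1.2]⟩
  · intro v hv
    simp only [Finset.mem_powersetCard] at hv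
    have hvt : Disjoint v t := Finset.disjoint_of_subset_left hv.1 Finset.sdiff_disjoint
    simp only [Finset.mem_filter, Finset.mem_powersetCard]
    refine ⟨⟨Finset.union_subset (hv.1.trans Finset.sdiff_subset) htu, ?_⟩,
      Finset.subset_union_right⟩
    rw [Finset.card_union_of_disjoint hvt, hv.2]
    omega
  · intro s hs
    simp only [Finset.mem_filter] at hs
    exact Finset.sdiff_union_of_subset hs.2
  · intro v hv
    simp only [Finset.mem_powersetCard] at hv
    have hvt : Disjoint v t := Finset.disjoint_of_subset_left hv.1 Finset.sdiff_disjoint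
    show (v ∪ t) \ t = v
    rw [Finset.union_sdiff_right, Finset.sdiff_eq_self_of_disjoint hvt]

theorem pairwise_indep_counterexample
    (n : ℕ) (δ : ℝ) (hδ : 0 < δ) (m : ℕ) (hm : 0 < m) (hmn : m ≤ n)
    (hmdef : (m : ℝ) = (n + δ) / (δ + 1)) :
    ∃ (Ω : Type) (_ : MeasurableSpace Ω) (μ : Measure Ω) (_ : IsProbabilityMeasure μ)
      (X : Fin n → Ω → ℝ),
      (∀ i, Measurable (X i)) ∧
      (∀ i ω, 0 ≤ X i ω) ∧
      (∀ i, ∫ ω, X i ω ∂μ = 1) ∧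
      (∀ i j, i ≠ j → IndepFun (X i) (X j) μ) ∧
      (μ {ω | ∑ i, X i ω < n + δ}).toReal = δ / (n + δ) := by
  classical
  have hn : 0 < n := lt_of_lt_of_le hm hmn
  have hnδ : (0 : ℝ) < n + δ := by positivity
  have hm' : (0 : ℝ) < m := by exact_mod_cast hm
  have hkey : (m : ℝ) * (δ + 1) = n + δ := by
    rw [hmdef]; field_simp
  set a : ℝ := δ / (n + δ) with ha
  set b : ℝ := (n / (n + δ)) / (n.choose m) with hb
  set c : ℝ := (n + δ) / m with hc
  have hC : (0 : ℝ) < (n.choose m : ℝ) := by exact_mod_cast Nat.choose_pos hmn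
  have ha0 : 0 ≤ a := by positivity
  have hb0 : 0 ≤ b := by positivity
  have hc0 : 0 < c := by positivity
  letI : MeasurableSpace (Finset (Fin n)) := ⊤
  set K : Finset (Finset (Fin n)) := Finset.powersetCard m Finset.univ with hK
  set μ : Measure (Finset (Fin n)) :=
    ENNReal.ofReal a • Measure.dirac ∅ + ∑ s ∈ K, ENNReal.ofReal b • Measure.dirac s with hμ
  have hms : ∀ T : Set (Finset (Fin n)), MeasurableSet T := fun _ =>
    MeasurableSpace.measurableSet_top
  have hμT : ∀ T : Set (Finset (Fin n)),
      μ T = ENNReal.ofReal a * T.indicator 1 ∅ +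
        ENNReal.ofReal b * (K.filter (fun s => s ∈ T)).card := by
    intro T
    have hT : MeasurableSet T := trivial
    rw [hμ, Measure.add_apply, Measure.smul_apply, Measure.dirac_apply' _ hT, smul_eq_mul,
      Measure.finset_sum_apply]
    congr 1
    have h1 : ∀ s ∈ K, (ENNReal.ofReal b • Measure.dirac s) T
        = if s ∈ T then ENNReal.ofReal b else 0 := by
      intro s _
      rw [Measure.smul_apply, Measure.dirac_apply' _ hT, smul_eq_mul]
      by_cases h : s ∈ T <;> simp [Set.indicator_apply, h]
    calc ∑ s ∈ K, (ENNReal.ofReal b • Measure.dirac s) T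
        = ∑ s ∈ K, (if s ∈ T then ENNReal.ofReal b else 0) := Finset.sum_congr rfl h1
      _ = ∑ _s ∈ K.filter (fun s => s ∈ T), ENNReal.ofReal b :=
          (Finset.sum_filter _ _).symm
      _ = ((K.filter (fun s => s ∈ T)).card : ENNReal) * ENNReal.ofReal b := by
          rw [Finset.sum_const, nsmul_eq_mul]
      _ = _ := mul_comm _ _
  have hKcard : K.card = n.choose m := by
    rw [hK, Finset.card_powersetCard, Finset.card_univ, Fintype.card_fin]
  have hμuniv : μ Set.univ = 1 := by
    rw [hμT]
    simp only [Set.mem_univ, Finset.filter_true, Set.indicator_univ, Pi.one_apply, mul_one,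
      hKcard]
    rw [← ENNReal.ofReal_natCast, ← ENNReal.ofReal_mul hb0,
      ← ENNReal.ofReal_add ha0 (by positivity), ← ENNReal.ofReal_one]
    congr 1
    rw [ha, hb]
    field_simp
    ring
  have hnat1 : n * ((n - 1).choose (m - 1)) = n.choose m * m := by
    have h := Nat.add_one_mul_choose_eq (n - 1) (m - 1)
    have hn1 : n - 1 + 1 = n := Nat.succ_pred_eq_of_pos hn
    have hm1 : m - 1 + 1 = m := Nat.succ_pred_eq_of_pos hm
    simpa only [Nat.succ_eq_add_one, hn1, hm1] using h
  have e1 : (n : ℝ) * ((n - 1).choose (m - 1) : ℝ) = (n.choose m : ℝ) * m := by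
    exact_mod_cast hnat1
  have hc1' : ((n - 1).choose (m - 1) : ℝ) = (n.choose m : ℝ) * m / n := by
    rw [eq_div_iff (by positivity)]
    linarith [e1]
  have hb1 : b * ((n - 1).choose (m - 1) : ℝ) = m / (n + δ) := by
    rw [hb, hc1']
    field_simp
  have hμA : ∀ i : Fin n, μ {ω : Finset (Fin n) | i ∈ ω} = ENNReal.ofReal (m / (n + δ)) := by
    intro i
    rw [hμT]
    have hemp : (∅ : Finset (Fin n)) ∉ {ω : Finset (Fin n) | i ∈ ω} := by simp
    rw [Set.indicator_of_notMem hemp, mul_zero, zero_add]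
    have hcount := PIC_count_subsets (Finset.univ : Finset (Fin n)) {i} m (by simp)
      (by simpa using Nat.one_le_iff_ne_zero.mpr hm.ne')
    simp only [Finset.singleton_subset_iff, Finset.card_univ, Fintype.card_fin,
      Finset.card_singleton] at hcount
    simp only [Set.mem_setOf_eq, ← hK] at hcount ⊢
    rw [Finset.filter_congr_decidable]
    rw [hcount, ← ENNReal.ofReal_natCast, ← ENNReal.ofReal_mul hb0, hb1]
  have key : ∀ (T : Set (Finset (Fin n))), (∅ ∈ T) → (∀ s ∈ K, s ∉ T) →
      μ T = ENNReal.ofReal a := by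
    intro T h1 h2
    rw [hμT, Set.indicator_of_mem h1, Finset.filter_eq_empty_iff.mpr h2]
    simp
  -- the random variables
  set X : Fin n → Finset (Fin n) → ℝ :=
    fun i => Set.indicator {ω : Finset (Fin n) | i ∈ ω} (fun _ => c) with hX
  have hXmeas : ∀ i, Measurable (X i) := fun i => fun _ _ => trivial
  have hXnn : ∀ i ω, 0 ≤ X i ω := fun i ω =>
    Set.indicator_nonneg (fun _ _ => le_of_lt hc0) ω
  haveI hPM : IsProbabilityMeasure μ := ⟨hμuniv⟩
  have hXint : ∀ i, ∫ ω, X i ω ∂μ = 1 := by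
    intro i
    rw [hX]
    rw [MeasureTheory.integral_indicator_const c (hms _)]
    rw [measureReal_def, hμA i, ENNReal.toReal_ofReal (by positivity), smul_eq_mul, hc]
    field_simp
  have hXindep : ∀ i j, i ≠ j → IndepFun (X i) (X j) μ := by
    intro i j hij
    have hn2 : 2 ≤ n := by
      by_contra h
      push_neg at h
      exact hij (Fin.ext (by omega))
    have hm2 : 2 ≤ m := by
      by_contra h
      push_neg at h
      have hm1 : m = 1 := by omega
      rw [hm1] at hkey
      have hn1 : (n : ℝ) = 1 := by push_cast at hkey; linarith
      have : n = 1 := by exact_mod_cast hn1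
      omega
    have hnat2 : (n - 1) * ((n - 2).choose (m - 2)) = (n - 1).choose (m - 1) * (m - 1) := by
      have h := Nat.add_one_mul_choose_eq (n - 2) (m - 2)
      have hn1 : n - 2 + 1 = n - 1 := by omega
      have hm1 : m - 2 + 1 = m - 1 := by omega
      simpa only [Nat.succ_eq_add_one, hn1, hm1] using h
    have e2 : ((n : ℝ) - 1) * ((n - 2).choose (m - 2) : ℝ)
        = ((n - 1).choose (m - 1) : ℝ) * ((m : ℝ) - 1) := by
      have h := congrArg (Nat.cast : ℕ → ℝ) hnat2
      push_cast [Nat.cast_sub (by omega : 1 ≤ n), Nat.cast_sub (by omega : 1 ≤ m)] at h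
      linarith
    have hn1R : (0 : ℝ) < (n : ℝ) - 1 := by
      have : (2 : ℝ) ≤ n := by exact_mod_cast hn2
      linarith
    have hc2' : ((n - 2).choose (m - 2) : ℝ)
        = ((n - 1).choose (m - 1) : ℝ) * ((m : ℝ) - 1) / ((n : ℝ) - 1) := by
      rw [eq_div_iff hn1R.ne']
      linarith [e2]
    have hb2 : b * ((n - 2).choose (m - 2) : ℝ) = (m / (n + δ)) * (m / (n + δ)) := by
      have h1 : b * ((n - 2).choose (m - 2) : ℝ)
          = (m / (n + δ)) * (((m : ℝ) - 1) / ((n : ℝ) - 1)) := by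
        rw [hc2', ← hb1]; ring
      have h2 : ((m : ℝ) - 1) / ((n : ℝ) - 1) = m / (n + δ) := by
        rw [div_eq_div_iff hn1R.ne' hnδ.ne']
        linear_combination hkey
      rw [h1, h2]
    -- measure of the intersection
    have hμAB : μ ({ω : Finset (Fin n) | i ∈ ω} ∩ {ω : Finset (Fin n) | j ∈ ω})
        = ENNReal.ofReal (m / (n + δ)) * ENNReal.ofReal (m / (n + δ)) := by
      rw [hμT]
      have hemp : (∅ : Finset (Fin n)) ∉
          ({ω : Finset (Fin n) | i ∈ ω} ∩ {ω : Finset (Fin n) | j ∈ ω}) := by simp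
      rw [Set.indicator_of_notMem hemp, mul_zero, zero_add]
      have hij' : i ∉ ({j} : Finset (Fin n)) := by simp [hij]
      have hcij : ({i, j} : Finset (Fin n)).card = 2 := by
        rw [Finset.card_insert_of_notMem hij', Finset.card_singleton]
      have hcount := PIC_count_subsets (Finset.univ : Finset (Fin n)) {i, j} m
        (by simp) (by rw [hcij]; exact hm2)
      simp only [Finset.insert_subset_iff, Finset.singleton_subset_iff, hcij,
        Finset.card_univ, Fintype.card_fin] at hcount
      simp only [Set.mem_inter_iff, Set.mem_setOf_eq, ← hK]
      rw [Finset.filter_congr_decidable]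
      rw [hcount, ← ENNReal.ofReal_natCast, ← ENNReal.ofReal_mul hb0, hb2,
        ENNReal.ofReal_mul (by positivity)]
    have hIS : IndepSet {ω : Finset (Fin n) | i ∈ ω} {ω : Finset (Fin n) | j ∈ ω} μ := by
      refine (ProbabilityTheory.indepSet_iff_measure_inter_eq_mul (hms _) (hms _) μ).mpr ?_
      rw [hμAB, hμA i, hμA j]
    have hlei : MeasurableSpace.comap (X i) inferInstance ≤
        MeasurableSpace.generateFrom {{ω : Finset (Fin n) | i ∈ ω}} := by
      rw [← measurable_iff_comap_le]
      exact Measurable.indicator measurable_const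
        (MeasurableSpace.measurableSet_generateFrom (Set.mem_singleton _))
    have hlej : MeasurableSpace.comap (X j) inferInstance ≤
        MeasurableSpace.generateFrom {{ω : Finset (Fin n) | j ∈ ω}} := by
      rw [← measurable_iff_comap_le]
      exact Measurable.indicator measurable_const
        (MeasurableSpace.measurableSet_generateFrom (Set.mem_singleton _))
    exact ProbabilityTheory.indep_of_indep_of_le_right
      (ProbabilityTheory.indep_of_indep_of_le_left hIS hlei) hlej
  have hsum : ∀ ω : Finset (Fin n), (∑ i, X i ω) = c * ω.card := by
    intro ω
    simp only [hX, Set.indicator_apply, Set.mem_setOf_eq]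
    rw [Finset.sum_ite_mem, Finset.univ_inter, Finset.sum_const, nsmul_eq_mul, mul_comm]
  have hfinal : (μ {ω | ∑ i, X i ω < n + δ}).toReal = δ / (n + δ) := by
    rw [key _ ?_ ?_, ENNReal.toReal_ofReal ha0]
    · simp only [Set.mem_setOf_eq, hsum, Finset.card_empty, Nat.cast_zero, mul_zero]
      exact hnδ
    · intro s hs
      rw [hK, Finset.mem_powersetCard] at hs
      simp only [Set.mem_setOf_eq, hsum, hs.2, not_lt]
      rw [hc, div_mul_cancel₀ _ hm'.ne']
  exact ⟨Finset (Fin n), inferInstance, μ, hPM, X, hXmeas, hXnn, hXint, hXindep, hfinal⟩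
end

section
/- Let δ > 0 and n be such that m := (n+δ)/(δ+2) is a positive integer with m ≤ n. Then there exists a collection of nonnegative 3-wise independent random variables X₁, ..., Xₙ, each with mean 1, such that Pr[X₁ + ... + Xₙ < n + δ] = (δ+1)²/((δ+2)(n+δ)). -/
open MeasureTheory ProbabilityTheory

/-- A finite family of real random variables is `k`-wise independent if every
subfamily of size at most `k` is mutually independent. -/
def kWiseIndepFun {Ω : Type*} [MeasurableSpace Ω] (μ : Measure Ω) (k : ℕ)
    {n : ℕ} (X : Fin n → Ω → ℝ) : Prop :=
  ∀ S : Finset (Fin n), S.card ≤ k →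
    iIndepFun (fun i : S => X i) μ

namespace TWI
open Finset


open Finset

lemma count_zero {n : ℕ} (m : ℕ) (U : Finset (Fin n)) (hUm : m < U.card) :
    (univ.filter fun ω : Finset (Fin n) => U ⊆ ω ∧ ω.card = m) = ∅ := by
  rw [Finset.filter_eq_empty_iff]
  rintro ω - ⟨hsub, hcard⟩
  have := Finset.card_le_card hsub
  omega

lemma count_eq {n : ℕ} (m : ℕ) (U : Finset (Fin n)) (hUm : U.card ≤ m) :
    (univ.filter fun ω : Finset (Fin n) => U ⊆ ω ∧ ω.card = m).card
      = (n - U.card).choose (m - U.card) := by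
  have hcard : (Finset.univ \ U).card = n - U.card := by
    rw [Finset.card_sdiff_of_subset (Finset.subset_univ U), Finset.card_univ, Fintype.card_fin]
  rw [← hcard, ← Finset.card_powersetCard (m - U.card) (Finset.univ \ U)]
  apply Finset.card_bij' (fun s _ => s \ U) (fun t _ => t ∪ U)
  · intro s hs
    simp only [Finset.mem_filter, Finset.mem_univ, true_and] at hs
    rw [Finset.mem_powersetCard]
    exact ⟨Finset.sdiff_subset_sdiff (Finset.subset_univ s) le_rfl,
      by rw [Finset.card_sdiff_of_subset hs.1, hs.2]⟩
  · intro t ht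
    rw [Finset.mem_powersetCard] at ht
    have hdisj : Disjoint t U :=
      Finset.disjoint_of_subset_left ht.1 Finset.sdiff_disjoint
    simp only [Finset.mem_filter, Finset.mem_univ, true_and]
    refine ⟨Finset.subset_union_right, ?_⟩
    rw [Finset.card_union_of_disjoint hdisj, ht.2]
    omega
  · intro s hs
    simp only [Finset.mem_filter, Finset.mem_univ, true_and] at hs
    exact Finset.sdiff_union_of_subset hs.1
  · intro t ht
    rw [Finset.mem_powersetCard] at ht
    exact Finset.union_sdiff_cancel_right
      (Finset.disjoint_of_subset_left ht.1 Finset.sdiff_disjoint)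

lemma choose_step (n m : ℕ) (h1 : 1 ≤ m) (h2 : m ≤ n) :
    (n : ℝ) * ((n - 1).choose (m - 1)) = (n.choose m) * m := by
  have h := Nat.add_one_mul_choose_eq (n - 1) (m - 1)
  have h3 : n - 1 + 1 = n := by omega
  have h4 : m - 1 + 1 = m := by omega
  simp only [Nat.succ_eq_add_one, h3, h4] at h
  exact_mod_cast congrArg (Nat.cast : ℕ → ℝ) h



lemma moment1 (d M N b c : ℝ) (hd : 0 < d) (hM : 1 ≤ M) (hMN : M < N)
    (hb : b = 1/(d+2) * (1 - 1/(d+2)) * N * (N-1) / (M*(N-M)))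
    (hc : c = (1/(d+2))^2 - b * (M*(M-1))/(N*(N-1))) :
    c + b * M / N = 1/(d+2) := by
  subst hb hc
  have h1 : d + 2 ≠ 0 := by linarith
  have h2 : M ≠ 0 := by linarith
  have h3 : N - M ≠ 0 := by intro h; nlinarith
  have h4 : N ≠ 0 := by intro h; nlinarith
  have h5 : N - 1 ≠ 0 := by intro h; nlinarith
  field_simp
  ring

lemma moment2 (d M N b c : ℝ)
    (hc : c = (1/(d+2))^2 - b * (M*(M-1))/(N*(N-1))) :
    c + b * (M*(M-1)) / (N*(N-1)) = (1/(d+2))^2 := by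
  subst hc; ring

lemma moment3 (d M N b c : ℝ) (hd : 0 < d) (hM : 1 ≤ M) (hMN : M < N) (hN3 : 3 ≤ N)
    (hb : b = 1/(d+2) * (1 - 1/(d+2)) * N * (N-1) / (M*(N-M)))
    (hc : c = (1/(d+2))^2 - b * (M*(M-1))/(N*(N-1)))
    (hkey : N = (d+2)*M - d) :
    c + b * (M*(M-1)*(M-2)) / (N*(N-1)*(N-2)) = (1/(d+2))^3 := by
  subst hb hc
  have h1 : d + 2 ≠ 0 := by linarith
  have h2 : M ≠ 0 := by linarith
  have h3 : N - M ≠ 0 := by intro h; nlinarith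
  have h4 : N ≠ 0 := by intro h; nlinarith
  have h5 : N - 1 ≠ 0 := by intro h; nlinarith
  have h6 : N - 2 ≠ 0 := by intro h; nlinarith
  subst hkey
  field_simp
  ring

lemma one_eq (d M N a b c : ℝ) (hd : 0 < d) (hM : 1 ≤ M) (hMN : M < N)
    (ha : a = (d+1)^2/((d+2)*(N+d)))
    (hb : b = 1/(d+2) * (1 - 1/(d+2)) * N * (N-1) / (M*(N-M)))
    (hc : c = (1/(d+2))^2 - b * (M*(M-1))/(N*(N-1)))
    (hkey : N = (d+2)*M - d) :
    a + b + c = 1 := by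
  subst ha hb hc
  have h1 : d + 2 ≠ 0 := by linarith
  have h2 : M ≠ 0 := by linarith
  have h3 : N - M ≠ 0 := by intro h; nlinarith
  have h4 : N ≠ 0 := by intro h; nlinarith
  have h5 : N - 1 ≠ 0 := by intro h; nlinarith
  have h7 : N + d ≠ 0 := by intro h; nlinarith
  subst hkey
  field_simp
  ring

lemma c_eq (d M N b c : ℝ) (hd : 0 < d) (hM : 1 ≤ M) (hMN : M < N)
    (hb : b = 1/(d+2) * (1 - 1/(d+2)) * N * (N-1) / (M*(N-M)))
    (hc : c = (1/(d+2))^2 - b * (M*(M-1))/(N*(N-1)))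
    (hkey : N = (d+2)*M - d) :
    c = (1/(d+2))^2 / (N-M) := by
  subst hb hc
  have h1 : d + 2 ≠ 0 := by linarith
  have h2 : M ≠ 0 := by linarith
  have h3 : N - M ≠ 0 := by intro h; nlinarith
  have h4 : N ≠ 0 := by intro h; nlinarith
  have h5 : N - 1 ≠ 0 := by intro h; nlinarith
  subst hkey
  field_simp
  ring

lemma ratio2 (n m : ℕ) (h1 : 2 ≤ m) (h2 : m ≤ n) :
    ((n-2).choose (m-2) : ℝ) * ((n:ℝ)*((n:ℝ)-1)) = (n.choose m) * ((m:ℝ)*((m:ℝ)-1)) := by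
  have s1 := choose_step n m (by omega) h2
  have s2 := choose_step (n-1) (m-1) (by omega) (by omega)
  have c1 : ((n-1 : ℕ) : ℝ) = (n:ℝ) - 1 := by
    rw [Nat.cast_sub (by omega : 1 ≤ n)]; norm_num
  have c2 : ((m-1 : ℕ) : ℝ) = (m:ℝ) - 1 := by
    rw [Nat.cast_sub (by omega : 1 ≤ m)]; norm_num
  have e1 : n - 1 - 1 = n - 2 := by omega
  have e2 : m - 1 - 1 = m - 2 := by omega
  rw [c1, c2, e1, e2] at s2
  linear_combination (n:ℝ) * s2 + ((m:ℝ)-1) * s1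

lemma ratio3 (n m : ℕ) (h1 : 3 ≤ m) (h2 : m ≤ n) :
    ((n-3).choose (m-3) : ℝ) * ((n:ℝ)*((n:ℝ)-1)*((n:ℝ)-2))
      = (n.choose m) * ((m:ℝ)*((m:ℝ)-1)*((m:ℝ)-2)) := by
  have r2 := ratio2 n m (by omega) h2
  have s3 := choose_step (n-2) (m-2) (by omega) (by omega)
  have c1 : ((n-2 : ℕ) : ℝ) = (n:ℝ) - 2 := by
    rw [Nat.cast_sub (by omega : 2 ≤ n)]; norm_num
  have c2 : ((m-2 : ℕ) : ℝ) = (m:ℝ) - 2 := by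
    rw [Nat.cast_sub (by omega : 2 ≤ m)]; norm_num
  have e1 : n - 2 - 1 = n - 3 := by omega
  have e2 : m - 2 - 1 = m - 3 := by omega
  rw [c1, c2, e1, e2] at s3
  linear_combination ((n:ℝ)*((n:ℝ)-1)) * s3 + ((m:ℝ)-2) * r2


open Finset

noncomputable def aC (n : ℕ) (d : ℝ) : ℝ := (d+1)^2 / ((d+2)*(n+d))
noncomputable def bC (n m : ℕ) (d : ℝ) : ℝ :=
  1/(d+2) * (1 - 1/(d+2)) * (n:ℝ) * ((n:ℝ)-1) / ((m:ℝ)*((n:ℝ)-(m:ℝ)))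
noncomputable def cC (n m : ℕ) (d : ℝ) : ℝ :=
  (1/(d+2))^2 - bC n m d * ((m:ℝ)*((m:ℝ)-1))/((n:ℝ)*((n:ℝ)-1))
noncomputable def wC (n m : ℕ) (d : ℝ) (ω : Finset (Fin n)) : ℝ :=
  aC n d * (if ω = ∅ then 1 else 0) + cC n m d * (if ω = univ then 1 else 0)
    + (bC n m d / (n.choose m)) * (if ω.card = m then 1 else 0)

lemma sum_decomp (n m : ℕ) (d : ℝ) (P : Finset (Fin n) → Prop) [DecidablePred P] :
    ∑ ω ∈ univ.filter P, wC n m d ω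
      = aC n d * (if P ∅ then 1 else 0) + cC n m d * (if P univ then 1 else 0)
        + (bC n m d / (n.choose m)) * ((univ.filter fun ω => P ω ∧ ω.card = m).card) := by
  simp only [wC]
  rw [Finset.sum_add_distrib, Finset.sum_add_distrib, ← Finset.mul_sum, ← Finset.mul_sum,
    ← Finset.mul_sum]
  congr 2
  · congr 1
    rw [Finset.sum_ite_eq' (univ.filter P) ∅ (fun _ => (1:ℝ))]
    simp
  · congr 1
    rw [Finset.sum_ite_eq' (univ.filter P) univ (fun _ => (1:ℝ))]
    simp
  · rw [Finset.sum_boole, Finset.filter_filter]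

lemma sum_w (n m : ℕ) (d : ℝ) (hd : 0 < d) (hm : 0 < m) (hmn : m < n)
    (hkey : (n:ℝ) = (d+2)*(m:ℝ) - d) (U : Finset (Fin n)) (hU : U.card ≤ 3) :
    ∑ ω ∈ univ.filter (fun ω => U ⊆ ω), wC n m d ω = (1/(d+2)) ^ U.card := by
  classical
  have hM : (1:ℝ) ≤ m := by exact_mod_cast hm
  have hMN : (m:ℝ) < n := by exact_mod_cast hmn
  have hCnm : (0:ℝ) < n.choose m := by exact_mod_cast Nat.choose_pos hmn.le
  rw [sum_decomp]
  by_cases hUe : U = ∅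
  · subst hUe
    have hcnt := count_eq (n := n) m ∅ (Nat.zero_le m)
    simp only [Finset.card_empty, Nat.sub_zero] at hcnt
    rw [hcnt]
    simp only [Finset.empty_subset, if_true, Finset.card_empty, pow_zero]
    rw [div_mul_cancel₀ _ (ne_of_gt hCnm)]
    have := one_eq d m n (aC n d) (bC n m d) (cC n m d) hd hM hMN rfl rfl rfl hkey
    linarith
  · have hU1 : 1 ≤ U.card := Finset.card_pos.mpr (Finset.nonempty_iff_ne_empty.mpr hUe)
    have hUn : U.card ≤ n := le_trans (Finset.card_le_card (Finset.subset_univ U)) (by simp)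
    rw [if_neg (by simpa [Finset.subset_empty] using hUe), if_pos (Finset.subset_univ U)]
    rw [mul_zero, zero_add, mul_one]
    have hr : U.card = 1 ∨ U.card = 2 ∨ U.card = 3 := by omega
    rcases hr with hc | hc | hc
    · -- r = 1
      rw [count_eq m U (by omega), hc]
      have hstep := choose_step n m (by omega) hmn.le
      have hNne : (n:ℝ) ≠ 0 := by
        have : (0:ℝ) < n := by exact_mod_cast Nat.pos_of_ne_zero (by omega)
        linarith
      have : ((n - 1).choose (m - 1) : ℝ) = (n.choose m) * (m:ℝ) / (n:ℝ) := by
        field_simp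
        linarith [hstep]
      rw [this]
      have hmom := moment1 d m n (bC n m d) (cC n m d) hd hM hMN rfl rfl
      rw [pow_one]
      calc cC n m d + bC n m d / ↑(n.choose m) * (↑(n.choose m) * ↑m / ↑n)
          = cC n m d + bC n m d * ↑m / ↑n := by
            field_simp
        _ = 1/(d+2) := hmom
    · -- r = 2
      have hn2 : 2 ≤ n := by omega
      by_cases hrm : 2 ≤ m
      · rw [count_eq m U (by omega), hc]
        have hrat := ratio2 n m hrm hmn.le
        have hN2 : (0:ℝ) < (n:ℝ)*((n:ℝ)-1) := by
          have : (2:ℝ) ≤ n := by exact_mod_cast hn2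
          nlinarith
        have : ((n - 2).choose (m - 2) : ℝ)
            = (n.choose m) * ((m:ℝ)*((m:ℝ)-1)) / ((n:ℝ)*((n:ℝ)-1)) := by
          rw [eq_div_iff (ne_of_gt hN2)]
          linarith [hrat]
        rw [this]
        have hmom := moment2 d m n (bC n m d) (cC n m d) rfl
        calc cC n m d + bC n m d / ↑(n.choose m)
              * (↑(n.choose m) * ((m:ℝ)*((m:ℝ)-1)) / ((n:ℝ)*((n:ℝ)-1)))
            = cC n m d + bC n m d * ((m:ℝ)*((m:ℝ)-1)) / ((n:ℝ)*((n:ℝ)-1)) := by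
              field_simp
          _ = (1/(d+2))^2 := hmom
      · -- m = 1
        have hm1 : m = 1 := by omega
        rw [count_zero m U (by omega)]
        simp only [Finset.card_empty, Nat.cast_zero, mul_zero, add_zero, hc]
        have hmom := moment2 d m n (bC n m d) (cC n m d) rfl
        have hMzero : ((m:ℝ)*((m:ℝ)-1)) = 0 := by rw [hm1]; norm_num
        rw [hMzero] at hmom
        simpa using hmom
    · -- r = 3
      have hn3 : 3 ≤ n := by omega
      have hN3 : (3:ℝ) ≤ n := by exact_mod_cast hn3
      by_cases hrm : 3 ≤ m
      · rw [count_eq m U (by omega), hc]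
        have hrat := ratio3 n m hrm hmn.le
        have hN2 : (0:ℝ) < (n:ℝ)*((n:ℝ)-1)*((n:ℝ)-2) := by
          have p1 : (0:ℝ) < (n:ℝ) := by linarith
          have p2 : (0:ℝ) < (n:ℝ)-1 := by linarith
          have p3 : (0:ℝ) < (n:ℝ)-2 := by linarith
          exact mul_pos (mul_pos p1 p2) p3
        have : ((n - 3).choose (m - 3) : ℝ)
            = (n.choose m) * ((m:ℝ)*((m:ℝ)-1)*((m:ℝ)-2)) / ((n:ℝ)*((n:ℝ)-1)*((n:ℝ)-2)) := by
          rw [eq_div_iff (ne_of_gt hN2)]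
          linarith [hrat]
        rw [this]
        have hmom := moment3 d m n (bC n m d) (cC n m d) hd hM hMN hN3 rfl rfl hkey
        calc cC n m d + bC n m d / ↑(n.choose m)
              * (↑(n.choose m) * ((m:ℝ)*((m:ℝ)-1)*((m:ℝ)-2)) / ((n:ℝ)*((n:ℝ)-1)*((n:ℝ)-2)))
            = cC n m d + bC n m d * ((m:ℝ)*((m:ℝ)-1)*((m:ℝ)-2)) / ((n:ℝ)*((n:ℝ)-1)*((n:ℝ)-2)) := by
              field_simp
          _ = (1/(d+2))^3 := hmom
      · rw [count_zero m U (by omega)]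
        simp only [Finset.card_empty, Nat.cast_zero, mul_zero, add_zero, hc]
        have hmom := moment3 d m n (bC n m d) (cC n m d) hd hM hMN hN3 rfl rfl hkey
        have hMzero : ((m:ℝ)*((m:ℝ)-1)*((m:ℝ)-2)) = 0 := by
          interval_cases m <;> norm_num
        rw [hMzero] at hmom
        simpa using hmom


lemma c_nonneg (n m : ℕ) (d : ℝ) (hd : 0 < d) (hM : 1 ≤ (m:ℝ)) (hMN : (m:ℝ) < n)
    (hkey : (n:ℝ) = (d+2)*(m:ℝ) - d) : 0 ≤ cC n m d := by
  rw [c_eq d m n (bC n m d) (cC n m d) hd hM hMN rfl rfl hkey]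
  apply div_nonneg (by positivity)
  linarith

lemma b_nonneg (n m : ℕ) (d : ℝ) (hd : 0 < d) (hM : 1 ≤ (m:ℝ)) (hMN : (m:ℝ) < n) :
    0 ≤ bC n m d := by
  unfold bC
  have h1 : (0:ℝ) ≤ 1/(d+2) := by positivity
  have h2 : (0:ℝ) ≤ 1 - 1/(d+2) := by
    rw [sub_nonneg, div_le_one (by linarith)]
    linarith
  have h3 : (0:ℝ) ≤ (n:ℝ) - 1 := by linarith
  have h4 : (0:ℝ) ≤ (n:ℝ) - m := by linarith
  have h5 : (0:ℝ) ≤ (m:ℝ) := by linarith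
  apply div_nonneg
  · apply mul_nonneg (mul_nonneg (mul_nonneg h1 h2) (Nat.cast_nonneg n)) h3
  · exact mul_nonneg h5 h4

lemma a_nonneg (n : ℕ) (d : ℝ) (hd : 0 < d) : 0 ≤ aC n d := by
  unfold aC
  apply div_nonneg (by positivity)
  have : (0:ℝ) ≤ (n:ℝ) := Nat.cast_nonneg n
  nlinarith

lemma ite_nonneg (P : Prop) [Decidable P] : (0:ℝ) ≤ (if P then (1:ℝ) else 0) := by
  split <;> norm_num

lemma w_nonneg (n m : ℕ) (d : ℝ) (hd : 0 < d) (hM : 1 ≤ (m:ℝ)) (hMN : (m:ℝ) < n)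
    (hkey : (n:ℝ) = (d+2)*(m:ℝ) - d) (ω : Finset (Fin n)) : 0 ≤ wC n m d ω := by
  unfold wC
  have hC : (0:ℝ) ≤ (n.choose m : ℝ) := Nat.cast_nonneg _
  apply add_nonneg (add_nonneg _ _) _
  · exact mul_nonneg (a_nonneg n d hd) (ite_nonneg _)
  · exact mul_nonneg (c_nonneg n m d hd hM hMN hkey) (ite_nonneg _)
  · exact mul_nonneg (div_nonneg (b_nonneg n m d hd hM hMN) hC) (ite_nonneg _)

end TWI
open Finset

theorem threewise_indep_counterexample
    (n : ℕ) (δ : ℝ) (hδ : 0 < δ) (m : ℕ) (hm : 0 < m) (hmn : m ≤ n)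
    (hmdef : (m : ℝ) = (n + δ) / (δ + 2)) :
    ∃ (Ω : Type) (_ : MeasurableSpace Ω) (μ : Measure Ω) (_ : IsProbabilityMeasure μ)
      (X : Fin n → Ω → ℝ),
      (∀ i, Measurable (X i)) ∧
      (∀ i ω, 0 ≤ X i ω) ∧
      (∀ i, ∫ ω, X i ω ∂μ = 1) ∧
      kWiseIndepFun μ 3 X ∧
      (μ {ω | ∑ i, X i ω < n + δ}).toReal = (δ + 1) ^ 2 / ((δ + 2) * (n + δ)) := by
  classical
  have hq : (0:ℝ) < δ + 2 := by linarith
  have hkey : (n:ℝ) = (δ+2)*(m:ℝ) - δ := by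
    rw [eq_div_iff (ne_of_gt hq)] at hmdef
    linarith
  have hM : (1:ℝ) ≤ (m:ℝ) := by exact_mod_cast hm
  have hmn' : m < n := by
    rcases lt_or_eq_of_le hmn with h | h
    · exact h
    · exfalso
      have hmn'' : (m:ℝ) = (n:ℝ) := by exact_mod_cast h
      nlinarith
  have hMN : (m:ℝ) < (n:ℝ) := by exact_mod_cast hmn'
  letI : MeasurableSpace (Finset (Fin n)) := ⊤
  haveI : MeasurableSingletonClass (Finset (Fin n)) := ⟨fun _ => trivial⟩
  have hw : ∀ ω, 0 ≤ TWI.wC n m δ ω := TWI.w_nonneg n m δ hδ hM hMN hkey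
  have htot : ∑ ω : Finset (Fin n), ENNReal.ofReal (TWI.wC n m δ ω) = 1 := by
    rw [← ENNReal.ofReal_sum_of_nonneg (fun i _ => hw i)]
    have h0 := TWI.sum_w n m δ hδ hm hmn' hkey ∅ (by simp)
    rw [Finset.filter_true_of_mem (fun x _ => Finset.empty_subset x)] at h0
    simp only [Finset.card_empty, pow_zero] at h0
    rw [h0, ENNReal.ofReal_one]
  set pm : PMF (Finset (Fin n)) :=
    PMF.ofFintype (fun ω => ENNReal.ofReal (TWI.wC n m δ ω)) htot with hpm
  haveI : IsProbabilityMeasure pm.toMeasure := PMF.toMeasure.isProbabilityMeasure pm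
  have hμF : ∀ (p : Finset (Fin n) → Prop) (_ : DecidablePred p),
      pm.toMeasure {ω | p ω}
        = ENNReal.ofReal (∑ ω ∈ univ.filter p, TWI.wC n m δ ω) := by
    intro p hp
    have hterm : ∀ ω : Finset (Fin n), ({ω' : Finset (Fin n) | p ω'}).indicator (⇑pm) ω
        = if p ω then ENNReal.ofReal (TWI.wC n m δ ω) else 0 := by
      intro ω
      rw [Set.indicator_apply]
      by_cases h : p ω
      · rw [if_pos (show ω ∈ {ω' : Finset (Fin n) | p ω'} from h), if_pos h]
        simp [hpm]
      · rw [if_neg (show ω ∉ {ω' : Finset (Fin n) | p ω'} from h), if_neg h]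
    rw [PMF.toMeasure_apply_fintype, Finset.sum_congr rfl (fun ω _ => hterm ω),
      ← Finset.sum_filter, ENNReal.ofReal_sum_of_nonneg (fun i _ => hw i)]
  have hsingleE : ∀ i : Fin n, pm.toMeasure {ω : Finset (Fin n) | i ∈ ω}
      = ENNReal.ofReal (1/(δ+2)) := by
    intro i
    rw [hμF (fun ω => i ∈ ω) inferInstance]
    have h1 := TWI.sum_w n m δ hδ hm hmn' hkey {i} (by simp)
    simp only [Finset.card_singleton, pow_one] at h1
    have h2 : (univ.filter fun ω : Finset (Fin n) => i ∈ ω)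
        = univ.filter (fun ω => {i} ⊆ ω) := by
      ext ω
      simp [Finset.singleton_subset_iff]
    rw [h2, h1]
  refine ⟨Finset (Fin n), inferInstance, pm.toMeasure, inferInstance,
    fun i ω => (δ+2) * (if i ∈ ω then (1:ℝ) else 0), ?_, ?_, ?_, ?_, ?_⟩
  · intro i
    exact measurable_from_top
  · intro i ω
    by_cases h : i ∈ ω <;> simp [h] <;> linarith
  · intro i
    rw [integral_fintype (Integrable.of_finite)]
    simp only [measureReal_def]
    have hsing : ∀ ω : Finset (Fin n), (pm.toMeasure {ω}).toReal = TWI.wC n m δ ω := by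
      intro ω
      rw [PMF.toMeasure_apply_singleton _ _ (measurableSet_singleton _)]
      simp [hpm, ENNReal.toReal_ofReal (hw ω)]
    have hterm : ∀ ω : Finset (Fin n),
        (pm.toMeasure {ω}).toReal • ((δ+2) * (if i ∈ ω then (1:ℝ) else 0))
          = (δ+2) * (if {i} ⊆ ω then TWI.wC n m δ ω else 0) := by
      intro ω
      rw [smul_eq_mul, hsing]
      by_cases h : i ∈ ω <;> simp [h, Finset.singleton_subset_iff] <;> ring
    rw [Finset.sum_congr rfl (fun ω _ => hterm ω), ← Finset.mul_sum, ← Finset.sum_filter]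
    have h1 := TWI.sum_w n m δ hδ hm hmn' hkey {i} (by simp)
    simp only [Finset.card_singleton, pow_one] at h1
    rw [h1]
    field_simp
  · intro S hS
    have hindepset : iIndepSet (fun i : S => {ω : Finset (Fin n) | (i : Fin n) ∈ ω})
        pm.toMeasure := by
      rw [ProbabilityTheory.iIndepSet_iff_meas_biInter
        (fun i => MeasurableSpace.measurableSet_top)]
      intro T
      have hUcard : (T.image (fun i : S => (i : Fin n))).card = T.card :=
        Finset.card_image_of_injective T Subtype.val_injective
      have hT3 : T.card ≤ 3 :=
        le_trans (le_trans (Finset.card_le_univ T) (by simp [Fintype.card_coe])) hS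
      have hset : (⋂ i ∈ T, {ω : Finset (Fin n) | (i : Fin n) ∈ ω})
          = {ω : Finset (Fin n) | T.image (fun i : S => (i : Fin n)) ⊆ ω} := by
        ext ω
        simp only [Set.mem_iInter, Set.mem_setOf_eq]
        constructor
        · intro h j hj
          rw [Finset.mem_image] at hj
          obtain ⟨i, hi, rfl⟩ := hj
          exact h i hi
        · intro h i hi
          exact h (Finset.mem_image_of_mem _ hi)
      rw [hset, hμF (fun ω => T.image (fun i : S => (i : Fin n)) ⊆ ω) inferInstance]
      have hsw := TWI.sum_w n m δ hδ hm hmn' hkey (T.image (fun i : S => (i : Fin n)))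
        (le_trans (le_of_eq hUcard) hT3)
      rw [hsw, hUcard]
      have hprod : ∏ i ∈ T, pm.toMeasure {ω : Finset (Fin n) | (i : Fin n) ∈ ω}
          = ENNReal.ofReal (1/(δ+2)) ^ T.card :=
        (Finset.prod_congr (rfl : T = T) (fun i _ => hsingleE (i : Fin n))).trans (Finset.prod_const _)
      rw [hprod, ← ENNReal.ofReal_pow (by positivity)]
    have hind := ProbabilityTheory.iIndepSet.iIndepFun_indicator (β := ℝ)
      (m := inferInstance) hindepset
    have hcomp := hind.comp (fun _ => fun x : ℝ => (δ+2) * x)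
      (fun _ => measurable_id.const_mul (δ+2))
    have heq : (fun i : S => fun ω : Finset (Fin n) => (δ+2) * (if (i : Fin n) ∈ ω then (1:ℝ) else 0))
        = fun i : S => (fun x : ℝ => (δ+2) * x) ∘
            ({ω : Finset (Fin n) | (i : Fin n) ∈ ω}.indicator fun _ => (1:ℝ)) := by
      funext i ω
      simp only [Function.comp_apply, Set.indicator_apply, Set.mem_setOf_eq]
    rw [heq]
    exact hcomp
  · have hXsum : ∀ ω : Finset (Fin n),
        ∑ i, (δ+2) * (if i ∈ ω then (1:ℝ) else 0) = (δ+2) * ω.card := by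
      intro ω
      rw [← Finset.mul_sum]
      congr 1
      rw [Finset.sum_boole]
      have : (univ.filter fun i : Fin n => i ∈ ω) = ω := by
        ext j
        simp
      rw [this]
    have hEev : {ω : Finset (Fin n) | ∑ i, (δ+2) * (if i ∈ ω then (1:ℝ) else 0) < ↑n + δ}
        = {ω : Finset (Fin n) | ω.card < m} := by
      ext ω
      simp only [Set.mem_setOf_eq, hXsum]
      have hnd : (n:ℝ) + δ = (δ+2) * (m:ℝ) := by linarith
      rw [hnd, mul_lt_mul_iff_right₀ hq, Nat.cast_lt]
    rw [hEev, hμF (fun ω => ω.card < m) inferInstance]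
    have hsum : ∑ ω ∈ univ.filter (fun ω : Finset (Fin n) => ω.card < m),
        TWI.wC n m δ ω = TWI.aC n δ := by
      rw [TWI.sum_decomp]
      have hP1 : (∅ : Finset (Fin n)).card < m := by simp [hm]
      have hP2 : ¬ ((univ : Finset (Fin n)).card < m) := by
        rw [Finset.card_univ, Fintype.card_fin]
        omega
      have hP3 : (univ.filter fun ω : Finset (Fin n) => ω.card < m ∧ ω.card = m) = ∅ := by
        rw [Finset.filter_eq_empty_iff]
        rintro ω - ⟨h1, h2⟩
        omega
      rw [if_pos hP1, if_neg hP2, hP3]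
      simp
    rw [hsum]
    rw [ENNReal.toReal_ofReal (TWI.a_nonneg n δ hδ)]
    simp [TWI.aC]
end
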